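/- arXiv:2005.14543 — 3 statements merged into one kernel-verified Lean document; each statement's English description precedes it below -/
import Mathlib

section
/- Let p > 1 and ε > 0. Suppose U : [0,T) → ℝ is C², satisfies U''(t) ≥ U(t)^p and U(t) ≥ 0 on [0,T), with U(0) = ε·A ≥ 0 and U'(0) = ε·B for some fixed constants A ≥ 0 and B > 0. Then there exist constants ε₀ > 0 and C > 0 (depending only on A, B, p) such that for all 0 < ε ≤ ε₀, the maximal existence time satisfies T ≤ C · ε^{-(p-1)/(p+1)}. -/
lemma myMonoOn {a b : ℝ} {f f' : ℝ → ℝ}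
    (hd : ∀ t ∈ Set.Ico a b, HasDerivAt f (f' t) t)
    (hnn : ∀ t ∈ Set.Ico a b, 0 ≤ f' t) :
    MonotoneOn f (Set.Ico a b) := by
  apply monotoneOn_of_deriv_nonneg (convex_Ico a b)
  · exact fun t ht => (hd t ht).continuousAt.continuousWithinAt
  · intro t ht
    rw [interior_Ico] at ht
    exact ((hd t (Set.Ioo_subset_Ico_self ht)).differentiableAt).differentiableWithinAt
  · intro t ht
    rw [interior_Ico] at ht
    rw [(hd t (Set.Ioo_subset_Ico_self ht)).deriv]
    exact hnn t (Set.Ioo_subset_Ico_self ht)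

lemma myAntiOn {a b : ℝ} {f f' : ℝ → ℝ}
    (hd : ∀ t ∈ Set.Ico a b, HasDerivAt f (f' t) t)
    (hnp : ∀ t ∈ Set.Ico a b, f' t ≤ 0) :
    AntitoneOn f (Set.Ico a b) := by
  apply antitoneOn_of_deriv_nonpos (convex_Ico a b)
  · exact fun t ht => (hd t ht).continuousAt.continuousWithinAt
  · intro t ht
    rw [interior_Ico] at ht
    exact ((hd t (Set.Ioo_subset_Ico_self ht)).differentiableAt).differentiableWithinAt
  · intro t ht
    rw [interior_Ico] at ht
    rw [(hd t (Set.Ioo_subset_Ico_self ht)).deriv]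
    exact hnp t (Set.Ioo_subset_Ico_self ht)

set_option maxHeartbeats 2000000 in
theorem stmt7 (p A B : ℝ) (hp : 1 < p) (hA : 0 ≤ A) (hB : 0 < B) :
    ∃ ε₀ > (0:ℝ), ∃ C > (0:ℝ), ∀ ε : ℝ, 0 < ε → ε ≤ ε₀ →
      ∀ T : ℝ, 0 < T →
      ∀ U U' U'' : ℝ → ℝ,
        (∀ t ∈ Set.Ico (0:ℝ) T, HasDerivAt U (U' t) t) →
        (∀ t ∈ Set.Ico (0:ℝ) T, HasDerivAt U' (U'' t) t) →
        ContinuousOn U'' (Set.Ico (0:ℝ) T) →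
        (∀ t ∈ Set.Ico (0:ℝ) T, U t ≥ 0) →
        (∀ t ∈ Set.Ico (0:ℝ) T, U'' t ≥ U t ^ p) →
        U 0 = ε * A → U' 0 = ε * B →
        T ≤ C * ε ^ (-(p - 1) / (p + 1)) := by
  have hp1 : (0:ℝ) < p + 1 := by linarith
  have hpm : (0:ℝ) < p - 1 := by linarith
  set c : ℝ := Real.sqrt (2 / (p + 1)) with hc_def
  have hc : 0 < c := Real.sqrt_pos.mpr (by positivity)
  set k : ℝ := (p - 1) / 2 * c with hk_def
  have hk : 0 < k := by positivity
  set M : ℝ := B ^ (-(p - 1) / 2) / k with hM_def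
  have hM : 0 < M := div_pos (Real.rpow_pos_of_pos hB _) hk
  set D : ℝ := B ^ 2 * (p + 1) / (2 * (A + 1) ^ (p + 1)) with hD_def
  have hA1 : (0:ℝ) < A + 1 := by linarith
  have hD : 0 < D := by
    apply div_pos (by positivity)
    positivity
  refine ⟨min 1 (D ^ (1 / (p - 1))), lt_min one_pos (Real.rpow_pos_of_pos hD _), 1 + M,
    by linarith, ?_⟩
  intro ε hε hεle T hT U U' U'' hdU hdU' _ hUnn hineq hU0 hU'0
  have hε1 : ε ≤ 1 := le_trans hεle (min_le_left _ _)
  -- smallness: (2/(p+1)) * (ε*A)^(p+1) ≤ (ε*B)^2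
  have hsmall : 2 / (p + 1) * (ε * A) ^ (p + 1) ≤ (ε * B) ^ 2 := by
    have hεD : ε ^ (p - 1) ≤ D := by
      have h1 : ε ^ (p - 1) ≤ (D ^ (1 / (p - 1))) ^ (p - 1) :=
        Real.rpow_le_rpow hε.le (le_trans hεle (min_le_right _ _)) hpm.le
      rwa [← Real.rpow_mul hD.le, one_div_mul_cancel (ne_of_gt hpm), Real.rpow_one] at h1
    have hApow : A ^ (p + 1) ≤ (A + 1) ^ (p + 1) :=
      Real.rpow_le_rpow hA (by linarith) hp1.le
    have hmul : (ε * A) ^ (p + 1) = ε ^ (p + 1) * A ^ (p + 1) :=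
      Real.mul_rpow hε.le hA
    have hsplit : ε ^ (p + 1) = ε ^ (2:ℕ) * ε ^ (p - 1) := by
      rw [← Real.rpow_natCast ε 2, ← Real.rpow_add hε]
      congr 1
      push_cast
      ring
    rw [hmul, hsplit]
    have key : ε ^ (p - 1) * A ^ (p + 1) ≤ D * (A + 1) ^ (p + 1) := by
      apply mul_le_mul hεD hApow (Real.rpow_nonneg hA _) hD.le
    have hDval : 2 / (p + 1) * (D * (A + 1) ^ (p + 1)) = B ^ 2 := by
      rw [hD_def]
      field_simp
    calc 2 / (p + 1) * (ε ^ (2:ℕ) * ε ^ (p - 1) * A ^ (p + 1))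
        = ε ^ (2:ℕ) * (2 / (p + 1) * (ε ^ (p - 1) * A ^ (p + 1))) := by ring
      _ ≤ ε ^ (2:ℕ) * (2 / (p + 1) * (D * (A + 1) ^ (p + 1))) := by
          apply mul_le_mul_of_nonneg_left _ (by positivity)
          apply mul_le_mul_of_nonneg_left key (by positivity)
      _ = (ε * B) ^ 2 := by rw [hDval]; ring
  by_contra hcon
  push_neg at hcon
  set a : ℝ := -(p - 1) / (p + 1) with ha_def
  have hεa : 0 < ε ^ a := Real.rpow_pos_of_pos hε _
  set t0 : ℝ := ε ^ a with ht0_def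
  have ht0T : t0 < T := by
    calc t0 = 1 * ε ^ a := (one_mul _).symm
      _ ≤ (1 + M) * ε ^ a := by nlinarith
      _ < T := hcon
  have hIsub : Set.Ico t0 T ⊆ Set.Ico (0:ℝ) T := fun x hx =>
    ⟨le_trans hεa.le hx.1, hx.2⟩
  have h0mem : (0:ℝ) ∈ Set.Ico (0:ℝ) T := ⟨le_refl _, hT⟩
  -- U' monotone, hence U' ≥ εB
  have hU'mono : MonotoneOn U' (Set.Ico 0 T) :=
    myMonoOn hdU' (fun t ht => le_trans (Real.rpow_nonneg (hUnn t ht) p) (hineq t ht))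
  have hU'lb : ∀ t ∈ Set.Ico (0:ℝ) T, ε * B ≤ U' t := by
    intro t ht
    rw [← hU'0]
    exact hU'mono h0mem ht ht.1
  have hεB : 0 < ε * B := by positivity
  -- U t ≥ ε*B*t
  have hUlb : ∀ t ∈ Set.Ico (0:ℝ) T, ε * B * t ≤ U t := by
    have hmono : MonotoneOn (fun t => U t - ε * B * t) (Set.Ico 0 T) := by
      apply myMonoOn (f' := fun t => U' t - ε * B)
      · intro t ht
        exact (hdU t ht).sub (((hasDerivAt_id t).const_mul (ε * B)).congr_deriv (by ring))
      · intro t ht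
        linarith [hU'lb t ht]
    intro t ht
    have := hmono h0mem ht ht.1
    simp only [hU0] at this
    nlinarith
  -- energy
  set E : ℝ → ℝ := fun t => (U' t) ^ 2 - 2 / (p + 1) * U t ^ (p + 1) with hE_def
  set E' : ℝ → ℝ := fun t => 2 * U' t * U'' t - 2 / (p + 1) * (U' t * (p + 1) * U t ^ p)
    with hE'_def
  have hdE : ∀ t ∈ Set.Ico (0:ℝ) T, HasDerivAt E (E' t) t := by
    intro t ht
    have h1 : HasDerivAt (fun t => (U' t) ^ 2) (2 * U' t * U'' t) t := by
      have := (hdU' t ht).pow 2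
      exact this.congr_deriv (by ring)
    have h2 : HasDerivAt (fun t => U t ^ (p + 1)) (U' t * (p + 1) * U t ^ p) t := by
      have := (hdU t ht).rpow_const (p := p + 1) (Or.inr (by linarith))
      simpa using this
    exact h1.sub (h2.const_mul (2 / (p + 1)))
  have hEmono : MonotoneOn E (Set.Ico 0 T) := by
    apply myMonoOn hdE
    intro t ht
    have h1 : 2 / (p + 1) * (U' t * (p + 1) * U t ^ p) = 2 * U' t * U t ^ p := by
      field_simp
    rw [hE'_def]
    simp only
    rw [h1]
    have h2 : 0 < U' t := lt_of_lt_of_le hεB (hU'lb t ht)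
    nlinarith [hineq t ht]
  have hEnn : ∀ t ∈ Set.Ico (0:ℝ) T, 2 / (p + 1) * U t ^ (p + 1) ≤ (U' t) ^ 2 := by
    intro t ht
    have h0 := hEmono h0mem ht ht.1
    have hE0 : 0 ≤ E 0 := by
      rw [hE_def]; simp only [hU0, hU'0]; linarith [hsmall]
    have : 0 ≤ E t := le_trans hE0 h0
    rw [hE_def] at this
    simp only at this
    linarith
  -- U' ≥ c * U ^ ((p+1)/2)
  have hU'ge : ∀ t ∈ Set.Ico (0:ℝ) T, c * U t ^ ((p + 1) / 2) ≤ U' t := by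
    intro t ht
    have hU0t : 0 ≤ U t := hUnn t ht
    have hsq : (c * U t ^ ((p + 1) / 2)) ^ 2 = 2 / (p + 1) * U t ^ (p + 1) := by
      have hc2 : c ^ 2 = 2 / (p + 1) := Real.sq_sqrt (by positivity)
      have hr : (U t ^ ((p + 1) / 2)) ^ 2 = U t ^ (p + 1) := by
        rw [← Real.rpow_natCast (U t ^ ((p + 1) / 2)) 2, ← Real.rpow_mul hU0t]
        norm_num
      rw [mul_pow, hc2, hr]
    have h2 : (c * U t ^ ((p + 1) / 2)) ^ 2 ≤ (U' t) ^ 2 := by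
      rw [hsq]; exact hEnn t ht
    have hlnn : 0 ≤ c * U t ^ ((p + 1) / 2) := by positivity
    have hrnn : 0 ≤ U' t := le_trans hεB.le (hU'lb t ht)
    have h3 := Real.sqrt_le_sqrt h2
    rwa [Real.sqrt_sq hlnn, Real.sqrt_sq hrnn] at h3
  -- positivity of U on [t0, T)
  have hUpos : ∀ t ∈ Set.Ico t0 T, 0 < U t := by
    intro t ht
    have := hUlb t (hIsub ht)
    nlinarith [ht.1, hεa]
  -- antitone argument
  set q : ℝ := -(p - 1) / 2 with hq_def
  set f : ℝ → ℝ := fun t => U t ^ q + k * t with hf_def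
  have hanti : AntitoneOn f (Set.Ico t0 T) := by
    apply myAntiOn (f' := fun t => U' t * q * U t ^ (q - 1) + k)
    · intro t ht
      exact ((hdU t (hIsub ht)).rpow_const (Or.inl (ne_of_gt (hUpos t ht)))).add
        (((hasDerivAt_id t).const_mul k).congr_deriv (by ring))
    · intro t ht
      have hUt : 0 < U t := hUpos t ht
      have hr : 0 < U t ^ (q - 1) := Real.rpow_pos_of_pos hUt _
      have hU'c : c * U t ^ ((p + 1) / 2) ≤ U' t := hU'ge t (hIsub ht)
      have key : U' t * q * U t ^ (q - 1) ≤ -k := by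
        have h1 : U' t * q * U t ^ (q - 1) ≤ c * U t ^ ((p + 1) / 2) * q * U t ^ (q - 1) := by
          have hqneg : q < 0 := by rw [hq_def]; linarith
          have hqr : q * U t ^ (q - 1) ≤ 0 := by nlinarith
          have h := mul_le_mul_of_nonpos_right hU'c hqr
          rw [mul_assoc, mul_assoc]
          exact h
        have h2 : c * U t ^ ((p + 1) / 2) * q * U t ^ (q - 1) = -k := by
          rw [mul_comm (c * U t ^ ((p + 1) / 2)) q, mul_assoc q, mul_assoc,
            ← Real.rpow_add hUt]
          have : (p + 1) / 2 + (q - 1) = 0 := by rw [hq_def]; ring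
          rw [this, Real.rpow_zero, hk_def, hq_def]
          ring
        linarith
      linarith
  -- final contradiction
  have ht' : (1 + M) * ε ^ a < ((1 + M) * ε ^ a + T) / 2 := by linarith
  set t : ℝ := ((1 + M) * ε ^ a + T) / 2 with ht_def
  have htmem : t ∈ Set.Ico t0 T := by
    constructor
    · have : t0 ≤ (1 + M) * ε ^ a := by
        calc t0 = 1 * ε ^ a := (one_mul _).symm
          _ ≤ (1 + M) * ε ^ a := by nlinarith
      linarith
    · rw [ht_def]; linarith
  have ht0mem : t0 ∈ Set.Ico t0 T := ⟨le_refl _, ht0T⟩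
  have hf_le : f t ≤ f t0 := hanti ht0mem htmem htmem.1
  have hWt : 0 < U t ^ q := Real.rpow_pos_of_pos (hUpos t htmem) _
  -- bound on U t0 ^ q
  have hWt0 : U t0 ^ q ≤ B ^ q * ε ^ a := by
    have hU0' : ε * B * t0 ≤ U t0 := hUlb t0 (hIsub ht0mem)
    have hpos0 : 0 < ε * B * t0 := by positivity
    have h1 : U t0 ^ q ≤ (ε * B * t0) ^ q :=
      Real.rpow_le_rpow_of_nonpos hpos0 hU0' (by rw [hq_def]; linarith)
    have hqa : q + a * q = a := by rw [hq_def, ha_def]; field_simp; ring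
    have h2 : (ε * B * t0) ^ q = B ^ q * ε ^ a := by
      calc (ε * B * t0) ^ q = ε ^ q * B ^ q * ε ^ (a * q) := by
            rw [Real.mul_rpow (mul_nonneg hε.le hB.le) hεa.le,
              Real.mul_rpow hε.le hB.le, ht0_def, ← Real.rpow_mul hε.le]
        _ = B ^ q * (ε ^ q * ε ^ (a * q)) := by ring
        _ = B ^ q * ε ^ (q + a * q) := by rw [← Real.rpow_add hε]
        _ = B ^ q * ε ^ a := by rw [hqa]
    linarith [h1, le_of_eq h2]
  have hft : U t ^ q + k * t ≤ U t0 ^ q + k * t0 := hf_le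
  have h3 : k * t < B ^ q * ε ^ a + k * ε ^ a := by
    linarith [hft, hWt, hWt0, ht0_def.le, ht0_def.ge]
  have hBq : B ^ q = M * k := by rw [hM_def]; field_simp
  rw [hBq] at h3
  have h6 : k * ((1 + M) * ε ^ a) = M * k * ε ^ a + k * ε ^ a := by ring
  have h5 : t < (1 + M) * ε ^ a := lt_of_mul_lt_mul_left (by linarith) hk.le
  linarith [ht']
end

section
/- Let p > 1 and ε > 0. Suppose U : [0,T) → ℝ is C², satisfies U''(t) ≥ U(t)^p and U(t) ≥ 0 on [0,T), with U(0) = ε·A > 0 and U'(0) = 0. Then there exist ε₀ > 0 and C > 0 depending only on A and p such that for all 0 < ε ≤ ε₀ the maximal existence time satisfies T ≤ C · ε^{-(p-1)/2}. -/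
lemma monoIco {a b : ℝ} {f f' : ℝ → ℝ}
    (hf : ∀ t ∈ Set.Ico a b, HasDerivAt f (f' t) t)
    (h0 : ∀ t ∈ Set.Ico a b, 0 ≤ f' t) : MonotoneOn f (Set.Ico a b) := by
  apply monotoneOn_of_deriv_nonneg (convex_Ico a b)
    (fun t ht => (hf t ht).continuousAt.continuousWithinAt)
  · intro t ht
    rw [interior_Ico] at ht
    exact (hf t (Set.Ioo_subset_Ico_self ht)).differentiableAt.differentiableWithinAt
  · intro t ht
    rw [interior_Ico] at ht
    rw [(hf t (Set.Ioo_subset_Ico_self ht)).deriv]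
    exact h0 t (Set.Ioo_subset_Ico_self ht)

lemma antiIco {a b : ℝ} {f f' : ℝ → ℝ}
    (hf : ∀ t ∈ Set.Ico a b, HasDerivAt f (f' t) t)
    (h0 : ∀ t ∈ Set.Ico a b, f' t ≤ 0) : AntitoneOn f (Set.Ico a b) := by
  apply antitoneOn_of_deriv_nonpos (convex_Ico a b)
    (fun t ht => (hf t ht).continuousAt.continuousWithinAt)
  · intro t ht
    rw [interior_Ico] at ht
    exact (hf t (Set.Ioo_subset_Ico_self ht)).differentiableAt.differentiableWithinAt
  · intro t ht
    rw [interior_Ico] at ht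
    rw [(hf t (Set.Ioo_subset_Ico_self ht)).deriv]
    exact h0 t (Set.Ioo_subset_Ico_self ht)

set_option maxHeartbeats 1000000 in
theorem stmt8 (p A : ℝ) (hp : 1 < p) (hA : 0 < A) :
    ∃ ε₀ > (0:ℝ), ∃ C > (0:ℝ), ∀ ε : ℝ, 0 < ε → ε ≤ ε₀ →
      ∀ T : ℝ, 0 < T →
      ∀ U U' U'' : ℝ → ℝ,
        (∀ t ∈ Set.Ico (0:ℝ) T, HasDerivAt U (U' t) t) →
        (∀ t ∈ Set.Ico (0:ℝ) T, HasDerivAt U' (U'' t) t) →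
        ContinuousOn U'' (Set.Ico (0:ℝ) T) →
        (∀ t ∈ Set.Ico (0:ℝ) T, U t ≥ 0) →
        (∀ t ∈ Set.Ico (0:ℝ) T, U'' t ≥ U t ^ p) →
        U 0 = ε * A → U' 0 = 0 →
        T ≤ C * ε ^ (-(p - 1) / 2) := by
  have hk0 : (0:ℝ) < Real.sqrt (1 / (p + 1)) :=
    Real.sqrt_pos.2 (by positivity)
  set k : ℝ := Real.sqrt (1 / (p + 1)) with hkdef
  refine ⟨1, one_pos, (Real.sqrt 2 + 2 / ((p - 1) * k)) * A ^ (-(p - 1) / 2), ?_, ?_⟩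
  · have h2 : (0:ℝ) < Real.sqrt 2 := Real.sqrt_pos.2 (by norm_num)
    have : (0:ℝ) < 2 / ((p - 1) * k) := div_pos two_pos (mul_pos (by linarith) hk0)
    have : (0:ℝ) < A ^ (-(p - 1) / 2) := Real.rpow_pos_of_pos hA _
    positivity
  intro ε hε hε1 T hT U U' U'' hU hU' hU''c hUpos hODE hU0 hU'0
  set B : ℝ := ε * A with hBdef
  have hB : 0 < B := mul_pos hε hA
  have h0mem : (0:ℝ) ∈ Set.Ico (0:ℝ) T := ⟨le_refl 0, hT⟩
  -- U' is nonnegative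
  have hU'mono : MonotoneOn U' (Set.Ico 0 T) :=
    monoIco hU' (fun t ht => le_trans (Real.rpow_nonneg (hUpos t ht) p) (hODE t ht))
  have hU'nn : ∀ t ∈ Set.Ico (0:ℝ) T, 0 ≤ U' t := fun t ht => by
    have := hU'mono h0mem ht ht.1
    rw [hU'0] at this; exact this
  -- U is monotone, so U ≥ B
  have hUmono : MonotoneOn U (Set.Ico 0 T) := monoIco hU hU'nn
  have hUB : ∀ t ∈ Set.Ico (0:ℝ) T, B ≤ U t := fun t ht => by
    have := hUmono h0mem ht ht.1
    rw [hU0] at this; exact this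
  have hUt0 : ∀ t ∈ Set.Ico (0:ℝ) T, 0 < U t := fun t ht => lt_of_lt_of_le hB (hUB t ht)
  -- U'' ≥ B^p
  have hU''B : ∀ t ∈ Set.Ico (0:ℝ) T, B ^ p ≤ U'' t := fun t ht =>
    le_trans (Real.rpow_le_rpow hB.le (hUB t ht) (by linarith)) (hODE t ht)
  -- U' t ≥ B^p * t
  have hU'low : ∀ t ∈ Set.Ico (0:ℝ) T, B ^ p * t ≤ U' t := by
    have hg : ∀ t ∈ Set.Ico (0:ℝ) T,
        HasDerivAt (fun s => U' s - B ^ p * s) (U'' t - B ^ p) t := fun t ht => by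
      exact ((hU' t ht).sub ((hasDerivAt_id t).const_mul (B ^ p))).congr_deriv (by ring)
    have := monoIco hg (fun t ht => sub_nonneg.2 (hU''B t ht))
    intro t ht
    have h := this h0mem ht ht.1
    simp only [hU'0] at h
    linarith [h]
  -- U t ≥ B + B^p * t^2/2
  have hUlow : ∀ t ∈ Set.Ico (0:ℝ) T, B + B ^ p * t ^ 2 / 2 ≤ U t := by
    have hg : ∀ t ∈ Set.Ico (0:ℝ) T,
        HasDerivAt (fun s => U s - B ^ p * s ^ 2 / 2) (U' t - B ^ p * t) t := fun t ht => by
      have h2 : HasDerivAt (fun s : ℝ => B ^ p * s ^ 2 / 2) (B ^ p * t) t := by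
        have := ((hasDerivAt_pow 2 t).const_mul (B ^ p)).div_const 2
        exact this.congr_deriv (by push_cast; ring)
      exact (hU t ht).sub h2
    have := monoIco hg (fun t ht => sub_nonneg.2 (hU'low t ht))
    intro t ht
    have h := this h0mem ht ht.1
    simp only [hU0] at h
    have hb0 : U 0 - B ^ p * (0:ℝ) ^ 2 / 2 = B := by rw [hU0]; ring
    linarith [h]
  -- energy estimate
  have hpp : (0:ℝ) < p + 1 := by linarith
  have hEd : ∀ t ∈ Set.Ico (0:ℝ) T,
      HasDerivAt (fun s => U' s ^ 2 - 2 / (p + 1) * U s ^ (p + 1))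
        (2 * U' t * U'' t - 2 / (p + 1) * (U' t * (p + 1) * U t ^ p)) t := by
    intro t ht
    have h1 : HasDerivAt (fun s => U' s ^ 2) (2 * U' t * U'' t) t := by
      have := (hU' t ht).pow 2
      exact this.congr_deriv (by push_cast; ring)
    have h2 : HasDerivAt (fun s => U s ^ (p + 1)) (U' t * (p + 1) * U t ^ p) t := by
      have := (hU t ht).rpow_const (p := p + 1) (Or.inl (hUt0 t ht).ne')
      simpa [add_sub_cancel_right] using this
    exact h1.sub (h2.const_mul (2 / (p + 1)))
  have hEmono := monoIco hEd (by
    intro t ht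
    have hc : 2 / (p + 1) * (U' t * (p + 1) * U t ^ p) = 2 * U' t * U t ^ p := by
      field_simp
    rw [hc]
    have := mul_nonneg (hU'nn t ht) (sub_nonneg.2 (hODE t ht))
    nlinarith)
  have hEn : ∀ t ∈ Set.Ico (0:ℝ) T,
      2 / (p + 1) * U t ^ (p + 1) - 2 / (p + 1) * B ^ (p + 1) ≤ U' t ^ 2 := by
    intro t ht
    have h := hEmono h0mem ht ht.1
    simp only [hU'0, hU0] at h
    have h0 : (0:ℝ) ^ 2 - 2 / (p + 1) * B ^ (p + 1) = -(2 / (p + 1) * B ^ (p + 1)) := by ring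
    linarith [h]
  -- the doubling time
  set z : ℝ := -(p - 1) / 2 with hzdef
  have hz0 : z ≤ 0 := by rw [hzdef]; linarith
  set t₁ : ℝ := Real.sqrt 2 * B ^ z with ht1def
  have hBz : (0:ℝ) < B ^ z := Real.rpow_pos_of_pos hB _
  have ht₁pos : 0 < t₁ := mul_pos (Real.sqrt_pos.2 (by norm_num)) hBz
  have e1 : t₁ ^ 2 = 2 * B ^ (-(p - 1)) := by
    have hzz : (B ^ z) ^ (2:ℕ) = B ^ (-(p - 1)) := by
      rw [← Real.rpow_natCast (B ^ z) 2, ← Real.rpow_mul hB.le]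
      congr 1
      rw [hzdef]; push_cast; ring
    rw [ht1def, mul_pow, Real.sq_sqrt (by norm_num : (0:ℝ) ≤ 2), hzz]
  have e2 : B + B ^ p * t₁ ^ 2 / 2 = 2 * B := by
    rw [e1]
    have : B ^ p * (2 * B ^ (-(p - 1))) / 2 = B ^ p * B ^ (-(p - 1)) := by ring
    rw [this, ← Real.rpow_add hB, show p + -(p - 1) = 1 by ring, Real.rpow_one]
    ring
  -- main bound
  set M : ℝ := t₁ + B ^ z * (2 / ((p - 1) * k)) with hMdef
  have hfrac : (0:ℝ) < 2 / ((p - 1) * k) := div_pos two_pos (mul_pos (by linarith) hk0)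
  have hTM : T ≤ M := by
    rcases le_or_gt T t₁ with hcase | h1T
    · have : 0 < B ^ z * (2 / ((p - 1) * k)) := mul_pos hBz hfrac
      rw [hMdef]; linarith
    -- phase 2
    have ht₁mem : t₁ ∈ Set.Ico (0:ℝ) T := ⟨ht₁pos.le, h1T⟩
    have hsub : Set.Ico t₁ T ⊆ Set.Ico (0:ℝ) T := fun t ht => ⟨le_trans ht₁pos.le ht.1, ht.2⟩
    have hU2B : ∀ t ∈ Set.Ico t₁ T, 2 * B ≤ U t := by
      intro t ht
      have h1 : B + B ^ p * t₁ ^ 2 / 2 ≤ U t₁ := hUlow t₁ ht₁mem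
      have h2 : U t₁ ≤ U t := hUmono ht₁mem (hsub ht) ht.1
      linarith [e2 ▸ h1]
    -- pointwise lower bound on U'
    have hlow : ∀ t ∈ Set.Ico t₁ T, k * U t ^ ((p + 1) / 2) ≤ U' t := by
      intro t ht
      have htm := hsub ht
      have hU2 := hU2B t ht
      have hUp : 0 < U t := hUt0 t htm
      have hBp : B ^ (p + 1) ≤ U t ^ (p + 1) / 2 := by
        have h1 : B ≤ U t / 2 := by linarith
        have h2 : B ^ (p + 1) ≤ (U t / 2) ^ (p + 1) :=
          Real.rpow_le_rpow hB.le h1 (by linarith)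
        have h3 : (U t / 2) ^ (p + 1) = U t ^ (p + 1) / 2 ^ (p + 1) :=
          Real.div_rpow hUp.le (by norm_num : (0:ℝ) ≤ 2) (p + 1)
        have h4 : (2:ℝ) ≤ 2 ^ (p + 1) := by
          calc (2:ℝ) = 2 ^ (1:ℝ) := (Real.rpow_one 2).symm
            _ ≤ 2 ^ (p + 1) := Real.rpow_le_rpow_of_exponent_le one_le_two (by linarith)
        have h5 : U t ^ (p + 1) / 2 ^ (p + 1) ≤ U t ^ (p + 1) / 2 := by
          gcongr
        linarith
      have hE := hEn t htm
      have hsq : k ^ 2 * (U t ^ ((p + 1) / 2)) ^ 2 ≤ U' t ^ 2 := by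
        have hk2 : k ^ 2 = 1 / (p + 1) := Real.sq_sqrt (by positivity)
        have hx : (U t ^ ((p + 1) / 2)) ^ 2 = U t ^ (p + 1) := by
          rw [← Real.rpow_natCast (U t ^ ((p + 1) / 2)) 2, ← Real.rpow_mul hUp.le]
          congr 1
          push_cast; ring
        rw [hk2, hx]
        have h6 : 2 / (p + 1) * B ^ (p + 1) ≤ 2 / (p + 1) * (U t ^ (p + 1) / 2) :=
          mul_le_mul_of_nonneg_left hBp (by positivity)
        have h7 : 2 / (p + 1) * (U t ^ (p + 1) / 2) = 1 / (p + 1) * U t ^ (p + 1) := by ring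
        linarith
      have ha : 0 ≤ k * U t ^ ((p + 1) / 2) :=
        mul_nonneg hk0.le (Real.rpow_nonneg hUp.le _)
      have hb := hU'nn t htm
      nlinarith [hsq, ha, hb]
    -- decay of V = U^z + c t on [t₁, T)
    have hVanti : AntitoneOn (fun s => U s ^ z + (p - 1) / 2 * k * s) (Set.Ico t₁ T) := by
      apply antiIco (f' := fun t => U' t * z * U t ^ (z - 1) + (p - 1) / 2 * k)
      · intro t ht
        have h1 := (hU t (hsub ht)).rpow_const (p := z) (Or.inl (hUt0 t (hsub ht)).ne')
        have h2 : HasDerivAt (fun s : ℝ => (p - 1) / 2 * k * s) ((p - 1) / 2 * k) t := by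
          simpa using (hasDerivAt_id t).const_mul ((p - 1) / 2 * k)
        exact h1.add h2
      · intro t ht
        have hUp := hUt0 t (hsub ht)
        have he : z - 1 = -(p + 1) / 2 := by rw [hzdef]; ring
        rw [he]
        have hcancel : U t ^ ((p + 1) / 2) * U t ^ (-(p + 1) / 2) = 1 := by
          rw [← Real.rpow_add hUp, show (p + 1) / 2 + -(p + 1) / 2 = 0 by ring,
            Real.rpow_zero]
        have hpos2 : 0 < U t ^ (-(p + 1) / 2) := Real.rpow_pos_of_pos hUp _
        have key : k ≤ U' t * U t ^ (-(p + 1) / 2) := by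
          calc k = k * (U t ^ ((p + 1) / 2) * U t ^ (-(p + 1) / 2)) := by
                rw [hcancel]; ring
            _ = k * U t ^ ((p + 1) / 2) * U t ^ (-(p + 1) / 2) := by ring
            _ ≤ U' t * U t ^ (-(p + 1) / 2) :=
                mul_le_mul_of_nonneg_right (hlow t ht) hpos2.le
        have hp2 : (0:ℝ) < (p - 1) / 2 := by linarith
        have hze : z = -((p - 1) / 2) := by rw [hzdef]; ring
        rw [hze]
        have h9 : (p - 1) / 2 * k ≤ (p - 1) / 2 * (U' t * U t ^ (-(p + 1) / 2)) :=
          mul_le_mul_of_nonneg_left key hp2.le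
        nlinarith [h9]
    -- conclude
    by_contra hcon
    push_neg at hcon
    have hMt₁ : t₁ ≤ M := by
      have : 0 < B ^ z * (2 / ((p - 1) * k)) := mul_pos hBz hfrac
      rw [hMdef]; linarith
    have hMmem : M ∈ Set.Ico t₁ T := ⟨hMt₁, hcon⟩
    have hVle : U M ^ z + (p - 1) / 2 * k * M ≤ U t₁ ^ z + (p - 1) / 2 * k * t₁ :=
      hVanti ⟨le_refl t₁, h1T⟩ hMmem hMt₁
    have hUt₁z : U t₁ ^ z ≤ B ^ z :=
      Real.rpow_le_rpow_of_nonpos hB (hUB t₁ ht₁mem) hz0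
    have hUMz : 0 < U M ^ z := Real.rpow_pos_of_pos (hUt0 M (hsub hMmem)) _
    have hMsub : (p - 1) / 2 * k * (M - t₁) = B ^ z := by
      rw [hMdef]
      have hk' : k ≠ 0 := hk0.ne'
      have hp' : p - 1 ≠ 0 := by intro h; linarith [h]
      field_simp
      ring
    have hexp : (p - 1) / 2 * k * (M - t₁) = (p - 1) / 2 * k * M - (p - 1) / 2 * k * t₁ := by
      ring
    linarith [hVle, hUt₁z, hUMz, hMsub, hexp]
  -- final rewriting
  have hMz : B ^ z = ε ^ z * A ^ z := by
    rw [hBdef]; exact Real.mul_rpow hε.le hA.le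
  calc T ≤ M := hTM
    _ = (Real.sqrt 2 + 2 / ((p - 1) * k)) * B ^ z := by rw [hMdef, ht1def]; ring
    _ = (Real.sqrt 2 + 2 / ((p - 1) * k)) * A ^ (-(p - 1) / 2) * ε ^ (-(p - 1) / 2) := by
        rw [hMz, hzdef]; ring
end

section
/- Let p > 1 and let U : [0,T) → ℝ be C² with U'' (t) ≥ U(t)^p, U(t) ≥ δ·t for all t ∈ [t₀, T) for some δ > 0 and t₀ ≥ 0, and U' ≥ 0. Then T < ∞. -/
set_option maxHeartbeats 1000000 in
theorem stmt11 (p δ t₀ : ℝ) (hp : 1 < p) (hδ : 0 < δ) (ht₀ : 0 ≤ t₀) :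
    ¬ ∃ U : ℝ → ℝ, ContDiff ℝ 2 U ∧
      (∀ t ∈ Set.Ici t₀, deriv (deriv U) t ≥ U t ^ p) ∧
      (∀ t ∈ Set.Ici t₀, U t ≥ δ * t) ∧
      (∀ t ∈ Set.Ici t₀, deriv U t ≥ 0) := by
  rintro ⟨U, hC, hpp, hlin, hder⟩
  have hp1 : (0:ℝ) < p + 1 := by linarith
  have hd1 : Differentiable ℝ U := hC.differentiable (by norm_num)
  have hd2 : Differentiable ℝ (deriv U) :=
    (((contDiff_succ_iff_deriv (n := 1)).mp (by exact_mod_cast hC)).2.2).differentiable (by norm_num)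
  set t₁ : ℝ := max t₀ 1 with ht₁def
  have ht₁0 : t₀ ≤ t₁ := le_max_left _ _
  have ht₁1 : (1:ℝ) ≤ t₁ := le_max_right _ _
  have hUpos : ∀ t, t₁ ≤ t → 0 < U t := by
    intro t ht
    have h1t : (1:ℝ) ≤ t := le_trans ht₁1 ht
    have := hlin t (le_trans ht₁0 ht)
    nlinarith
  set E : ℝ → ℝ := fun t => (deriv U t) ^ 2 - (2/(p+1)) * U t ^ (p+1) with hEdef
  have hEderiv : ∀ x, t₁ ≤ x → HasDerivAt E
      (2 * deriv U x * deriv (deriv U) x - (2/(p+1)) * (deriv U x * (p+1) * U x ^ p)) x := by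
    intro x hx
    have h1 : HasDerivAt U (deriv U x) x := (hd1 x).hasDerivAt
    have h2 : HasDerivAt (deriv U) (deriv (deriv U) x) x := (hd2 x).hasDerivAt
    have hsq : HasDerivAt (fun t => (deriv U t) ^ 2) (2 * deriv U x * deriv (deriv U) x) x := by
      have := h2.fun_pow 2
      simpa [mul_comm, mul_assoc, mul_left_comm] using this
    have hrp : HasDerivAt (fun t => U t ^ (p+1)) (deriv U x * (p+1) * U x ^ (p+1-1)) x :=
      h1.rpow_const (Or.inl (ne_of_gt (hUpos x hx)))
    have hps : p + 1 - 1 = p := by ring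
    rw [hps] at hrp
    rw [hEdef]
    exact hsq.sub (hrp.const_mul (2/(p+1)))
  have hEmono : MonotoneOn E (Set.Ici t₁) := by
    apply monotoneOn_of_deriv_nonneg (convex_Ici t₁)
    · exact ((hd2.continuous.pow 2).continuousOn).sub
        (continuousOn_const.mul ((hd1.continuous.continuousOn).rpow_const
          fun x hx => Or.inl (ne_of_gt (hUpos x hx))))
    · intro x hx
      rw [interior_Ici] at hx
      exact ((hEderiv x (le_of_lt hx)).differentiableAt).differentiableWithinAt
    · intro x hx
      rw [interior_Ici] at hx
      have hx' := le_of_lt (Set.mem_Ioi.mp hx)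
      rw [(hEderiv x hx').deriv]
      have h1 := hder x (le_trans ht₁0 hx')
      have h2 := hpp x (le_trans ht₁0 hx')
      have h3 : (2/(p+1)) * (deriv U x * (p+1) * U x ^ p) = 2 * deriv U x * U x ^ p := by
        field_simp
      rw [h3]
      nlinarith
  set M : ℝ := max 0 (-(E t₁)) with hMdef
  set L : ℝ := max 1 ((p+1) * M) with hLdef
  have hL1 : (1:ℝ) ≤ L := le_max_left _ _
  have hLM : (p+1) * M ≤ L := le_max_right _ _
  set t₂ : ℝ := max t₁ (L/δ) with ht₂def
  have ht₁₂ : t₁ ≤ t₂ := le_max_left _ _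
  have hLt₂ : L ≤ δ * t₂ := by
    have : L/δ ≤ t₂ := le_max_right _ _
    calc L = δ * (L/δ) := by field_simp
    _ ≤ δ * t₂ := mul_le_mul_of_nonneg_left this hδ.le
  have key : ∀ t, t₂ ≤ t → (1/(p+1)) * U t ^ (p+1) ≤ (deriv U t) ^ 2 := by
    intro t ht
    have ht₁t : t₁ ≤ t := le_trans ht₁₂ ht
    have hEt := hEmono (Set.self_mem_Ici) (Set.mem_Ici.mpr ht₁t) ht₁t
    have hUt : L ≤ U t := by
      have h1 : δ * t₂ ≤ δ * t := mul_le_mul_of_nonneg_left ht hδ.le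
      have h2 := hlin t (le_trans ht₁0 ht₁t)
      linarith
    have hUL : L ≤ U t ^ (p+1) := by
      calc L = L ^ (1:ℝ) := (Real.rpow_one L).symm
      _ ≤ L ^ (p+1) := Real.rpow_le_rpow_of_exponent_le hL1 (by linarith)
      _ ≤ U t ^ (p+1) := Real.rpow_le_rpow (by linarith) hUt (by linarith)
    have hME : -(E t₁) ≤ M := le_max_right _ _
    have hEt₁ : E t₁ = (deriv U t₁) ^ 2 - (2/(p+1)) * U t₁ ^ (p+1) := rfl
    have hEt' : E t = (deriv U t) ^ 2 - (2/(p+1)) * U t ^ (p+1) := rfl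
    have hM0 : 0 ≤ M := le_max_left _ _
    -- (p+1)*M ≤ L ≤ U t ^ (p+1), so M ≤ U^(p+1)/(p+1)
    rw [hEt'] at hEt
    have hUM : (p+1) * M ≤ U t ^ (p+1) := le_trans hLM hUL
    have h5 : (p+1) * (deriv U t ^ 2 - 2/(p+1) * U t ^ (p+1))
        = (p+1) * deriv U t ^ 2 - 2 * U t ^ (p+1) := by field_simp
    have h6 := mul_le_mul_of_nonneg_left hEt hp1.le
    rw [h5] at h6
    have h7 := mul_le_mul_of_nonneg_left hME hp1.le
    have h8 : (1/(p+1)) * U t ^ (p+1) ≤ deriv U t ^ 2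
        ↔ U t ^ (p+1) ≤ (p+1) * deriv U t ^ 2 := by
      rw [div_mul_eq_mul_div, one_mul, div_le_iff₀ hp1]; constructor <;> intro <;> linarith
    rw [h8]
    nlinarith
  set β : ℝ := (p-1)/2 with hβdef
  have hβ : 0 < β := by rw [hβdef]; linarith
  set c : ℝ := Real.sqrt (1/(p+1)) with hcdef
  have hc : 0 < c := Real.sqrt_pos.mpr (by positivity)
  have hcsq : c ^ 2 = 1/(p+1) := Real.sq_sqrt (by positivity)
  have step : ∀ t, t₂ ≤ t → c * U t ^ ((p+1)/2) ≤ deriv U t := by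
    intro t ht
    have ht₁t : t₁ ≤ t := le_trans ht₁₂ ht
    have hU := hUpos t ht₁t
    have hA : 0 ≤ deriv U t := hder t (le_trans ht₁0 ht₁t)
    have hB : 0 < U t ^ ((p+1)/2) := Real.rpow_pos_of_pos hU _
    have hsq : (U t ^ ((p+1)/2)) ^ (2:ℕ) = U t ^ (p+1) := by
      rw [← Real.rpow_natCast (U t ^ ((p+1)/2)) 2, ← Real.rpow_mul hU.le]
      norm_num
    have hk := key t ht
    nlinarith [hk, sq_nonneg (deriv U t - c * U t ^ ((p+1)/2)),
      sq_nonneg (deriv U t + c * U t ^ ((p+1)/2)), mul_pos hc hB]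
  set K : ℝ := β * c with hKdef
  have hK : 0 < K := mul_pos hβ hc
  have hWderiv : ∀ x, t₂ ≤ x → HasDerivAt (fun t => U t ^ (-β))
      (deriv U x * (-β) * U x ^ (-β - 1)) x := by
    intro x hx
    exact ((hd1 x).hasDerivAt).rpow_const
      (Or.inl (ne_of_gt (hUpos x (le_trans ht₁₂ hx))))
  have hWbound : ∀ x, t₂ ≤ x → deriv U x * (-β) * U x ^ (-β - 1) ≤ -K := by
    intro x hx
    have hU := hUpos x (le_trans ht₁₂ hx)
    have hpow : (0:ℝ) < U x ^ (-β - 1) := Real.rpow_pos_of_pos hU _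
    have hs := step x hx
    have hmul := mul_le_mul_of_nonneg_right hs hpow.le
    have hexp : (p+1)/2 + (-β - 1) = 0 := by rw [hβdef]; ring
    have hlhs : c * U x ^ ((p+1)/2) * U x ^ (-β - 1) = c := by
      rw [mul_assoc, ← Real.rpow_add hU, hexp, Real.rpow_zero, mul_one]
    rw [hlhs] at hmul
    rw [hKdef]
    nlinarith
  set G : ℝ → ℝ := fun t => U t ^ (-β) + K * t with hGdef
  have hGderiv : ∀ x, t₂ ≤ x → HasDerivAt G
      (deriv U x * (-β) * U x ^ (-β - 1) + K) x := by
    intro x hx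
    have h2 : HasDerivAt (fun t : ℝ => K * t) K x := by
      simpa using (hasDerivAt_id x).const_mul K
    exact (hWderiv x hx).add h2
  have hGanti : AntitoneOn G (Set.Ici t₂) := by
    apply antitoneOn_of_deriv_nonpos (convex_Ici t₂)
    · apply ContinuousOn.add
      · exact (hd1.continuous.continuousOn).rpow_const
          fun x hx => Or.inl (ne_of_gt (hUpos x (le_trans ht₁₂ hx)))
      · exact (continuous_const.mul continuous_id).continuousOn
    · intro x hx
      rw [interior_Ici] at hx
      exact ((hGderiv x hx.le).differentiableAt).differentiableWithinAt
    · intro x hx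
      rw [interior_Ici] at hx
      rw [(hGderiv x hx.le).deriv]
      have := hWbound x hx.le
      linarith
  set t₃ : ℝ := t₂ + (U t₂ ^ (-β))/K + 1 with ht₃def
  have hW₂pos : 0 < U t₂ ^ (-β) := Real.rpow_pos_of_pos (hUpos t₂ ht₁₂) _
  have ht₂₃ : t₂ ≤ t₃ := by
    rw [ht₃def]
    have : 0 ≤ (U t₂ ^ (-β))/K := div_nonneg hW₂pos.le hK.le
    linarith
  have hG := hGanti (Set.self_mem_Ici) (Set.mem_Ici.mpr ht₂₃) ht₂₃
  have hG2 : U t₃ ^ (-β) + K * t₃ ≤ U t₂ ^ (-β) + K * t₂ := hG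
  have hW₃pos : 0 < U t₃ ^ (-β) := Real.rpow_pos_of_pos (hUpos t₃ (le_trans ht₁₂ ht₂₃)) _
  have hcancel : K * ((U t₂ ^ (-β))/K) = U t₂ ^ (-β) := mul_div_cancel₀ _ (ne_of_gt hK)
  rw [ht₃def] at hG2
  nlinarith
end
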